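/- Let T : ℝ^{2n} → ℝ^{2n} be a linear map with no real eigenvalues, and let J_T be the linear complex structure obtained by acting as multiplication by i on the sum of generalized eigenspaces of the complexification of T for eigenvalues with positive imaginary part, and by -i on those with negative imaginary part. Then for every t ∈ [0,1], the map (1-t)T + tJ_T has no real eigenvalues. -/

import Mathlib

open Module.End

/-- If `T : ℝ^{2n} → ℝ^{2n}` has no real eigenvalues and `J` is the linear complex
structure whose complexification acts as `i` on the sum of generalized eigenspaces of
the complexified `T` for eigenvalues of positive imaginary part and as `-i` on those of
negative imaginary part, then `(1-t)T + tJ` has no real eigenvalues for `t ∈ [0,1]`. -/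
theorem stmt4 (n : ℕ)
    (T J : (Fin (2 * n) → ℝ) →ₗ[ℝ] (Fin (2 * n) → ℝ))
    (Tc Jc : (Fin (2 * n) → ℂ) →ₗ[ℂ] (Fin (2 * n) → ℂ))
    (hT : ∀ (c : ℝ) (v : Fin (2 * n) → ℝ), v ≠ 0 → T v ≠ c • v)
    (hTc : ∀ v : Fin (2 * n) → ℝ,
      Tc (fun i => (v i : ℂ)) = fun i => ((T v) i : ℂ))
    (hJc : ∀ v : Fin (2 * n) → ℝ,
      Jc (fun i => (v i : ℂ)) = fun i => ((J v) i : ℂ))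
    (hplus : ∀ x ∈ (⨆ μ ∈ {μ : ℂ | 0 < μ.im}, Module.End.maxGenEigenspace Tc μ),
      Jc x = Complex.I • x)
    (hminus : ∀ x ∈ (⨆ μ ∈ {μ : ℂ | μ.im < 0}, Module.End.maxGenEigenspace Tc μ),
      Jc x = (-Complex.I) • x) :
    ∀ t ∈ Set.Icc (0 : ℝ) 1, ∀ (c : ℝ) (v : Fin (2 * n) → ℝ), v ≠ 0 →
      ((1 - t) • T + t • J) v ≠ c • v := by
  rintro t ⟨ht0, ht1⟩ c v hv hEq
  -- The complexified combination
  set Sc : (Fin (2 * n) → ℂ) →ₗ[ℂ] (Fin (2 * n) → ℂ) :=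
    (((1 - t : ℝ) : ℂ) • Tc + ((t : ℝ) : ℂ) • Jc) with hSc
  -- Tc applied to a general complex vector, via real and imaginary parts
  have hTcgen : ∀ w : Fin (2 * n) → ℂ,
      Tc w = fun i => ((T (fun j => (w j).re)) i : ℂ) +
        Complex.I * ((T (fun j => (w j).im)) i : ℂ) := by
    intro w
    have hw : w = (fun i => (((w i).re : ℝ) : ℂ)) +
        Complex.I • (fun i => (((w i).im : ℝ) : ℂ)) := by
      funext i
      simp [Complex.ext_iff]
    calc Tc w = Tc (fun i => (((w i).re : ℝ) : ℂ)) +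
        Complex.I • Tc (fun i => (((w i).im : ℝ) : ℂ)) := by
          conv_lhs => rw [hw]
          rw [map_add, map_smul]
      _ = _ := by
          rw [hTc, hTc]
          funext i
          simp [mul_comm]
  -- Tc has no eigenvalue with zero imaginary part
  have hreal : ∀ μ : ℂ, μ.im = 0 → maxGenEigenspace Tc μ = ⊥ := by
    intro μ hμ
    by_contra h
    have h2 : genEigenspace Tc μ (Module.finrank ℂ (Fin (2 * n) → ℂ) : ℕ) ≠ ⊥ := by
      rw [← maxGenEigenspace_eq_genEigenspace_finrank]; exact h
    have h3 : HasEigenvalue Tc μ :=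
      hasEigenvalue_of_hasGenEigenvalue (k := Module.finrank ℂ (Fin (2 * n) → ℂ)) h2
    obtain ⟨w, hw⟩ := h3.exists_hasEigenvector
    have hwe : Tc w = μ • w := by
      simpa [Module.End.mem_eigenspace_iff] using hw.1
    set u : Fin (2 * n) → ℝ := fun j => (w j).re with hu
    set u' : Fin (2 * n) → ℝ := fun j => (w j).im with hu'
    have hcomp : ∀ i, ((T u) i : ℂ) + Complex.I * ((T u') i : ℂ)
        = μ • w i := by
      intro i
      have := congrFun (hTcgen w) i
      rw [hwe] at this
      exact this.symm
    have hre : ∀ i, (T u) i = μ.re * u i := by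
      intro i
      have := congrArg Complex.re (hcomp i)
      simpa [Complex.ext_iff, hμ, hu, hu'] using this
    have him : ∀ i, (T u') i = μ.re * u' i := by
      intro i
      have := congrArg Complex.im (hcomp i)
      simpa [Complex.ext_iff, hμ, hu, hu'] using this
    have hne : u ≠ 0 ∨ u' ≠ 0 := by
      by_contra hcon
      push_neg at hcon
      apply hw.2
      funext i
      have h1 := congrFun hcon.1 i
      have h2 := congrFun hcon.2 i
      simp only [hu, hu', Pi.zero_apply] at h1 h2
      exact Complex.ext h1 h2
    rcases hne with h | h
    · exact hT μ.re u h (by funext i; simpa using hre i)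
    · exact hT μ.re u' h (by funext i; simpa using him i)
  -- invariance of maxGenEigenspace under (Tc - μ • 1)
  have hinv : ∀ (μ : ℂ) (x : Fin (2 * n) → ℂ), x ∈ maxGenEigenspace Tc μ →
      (Tc - μ • 1) x ∈ maxGenEigenspace Tc μ := by
    intro μ x hx
    rw [Module.End.mem_maxGenEigenspace] at hx ⊢
    obtain ⟨k, hk⟩ := hx
    refine ⟨k, ?_⟩
    rw [← Module.End.mul_apply, ← pow_succ, pow_succ', Module.End.mul_apply, hk, map_zero]
  -- key: positive-imaginary gen eigenspaces of Tc go into gen eigenspaces of Sc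
  have keyP : ∀ μ : ℂ, 0 < μ.im → ∀ x ∈ maxGenEigenspace Tc μ,
      x ∈ maxGenEigenspace Sc (((1 - t : ℝ) : ℂ) * μ + ((t : ℝ) : ℂ) * Complex.I) := by
    intro μ hμ
    set ν : ℂ := ((1 - t : ℝ) : ℂ) * μ + ((t : ℝ) : ℂ) * Complex.I with hν
    have hstep : ∀ x ∈ maxGenEigenspace Tc μ,
        (Sc - ν • 1) x = ((1 - t : ℝ) : ℂ) • ((Tc - μ • 1) x) := by
      intro x hx
      have hxV : x ∈ (⨆ μ ∈ {μ : ℂ | 0 < μ.im}, Module.End.maxGenEigenspace Tc μ) :=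
        (le_iSup₂ (f := fun μ _ => Module.End.maxGenEigenspace Tc μ) μ hμ) hx
      have hJx := hplus x hxV
      simp only [LinearMap.sub_apply, LinearMap.smul_apply, Module.End.one_apply,
        hSc, LinearMap.add_apply, hJx, hν, map_smul, smul_smul]
      module
    have hpow : ∀ (k : ℕ) (x : Fin (2 * n) → ℂ), x ∈ maxGenEigenspace Tc μ →
        ((Sc - ν • 1) ^ k) x = (((1 - t : ℝ) : ℂ) ^ k) • (((Tc - μ • 1) ^ k) x) := by
      intro k
      induction k with
      | zero => intro x _; simp
      | succ k ih =>
        intro x hx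
        have h1 : ((Sc - ν • 1) ^ (k + 1)) x = ((Sc - ν • 1) ^ k) ((Sc - ν • 1) x) := by
          rw [pow_succ, Module.End.mul_apply]
        rw [h1, hstep x hx, map_smul, ih _ (hinv μ x hx), ← Module.End.mul_apply,
          ← pow_succ, smul_smul, ← pow_succ']
    intro x hx
    rw [Module.End.mem_maxGenEigenspace] at hx ⊢
    obtain ⟨k, hk⟩ := hx
    refine ⟨k, ?_⟩
    rw [hpow k x (by rw [Module.End.mem_maxGenEigenspace]; exact ⟨k, hk⟩), hk, smul_zero]
  have keyM : ∀ μ : ℂ, μ.im < 0 → ∀ x ∈ maxGenEigenspace Tc μ,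
      x ∈ maxGenEigenspace Sc (((1 - t : ℝ) : ℂ) * μ - ((t : ℝ) : ℂ) * Complex.I) := by
    intro μ hμ
    set ν : ℂ := ((1 - t : ℝ) : ℂ) * μ - ((t : ℝ) : ℂ) * Complex.I with hν
    have hstep : ∀ x ∈ maxGenEigenspace Tc μ,
        (Sc - ν • 1) x = ((1 - t : ℝ) : ℂ) • ((Tc - μ • 1) x) := by
      intro x hx
      have hxV : x ∈ (⨆ μ ∈ {μ : ℂ | μ.im < 0}, Module.End.maxGenEigenspace Tc μ) :=
        (le_iSup₂ (f := fun μ _ => Module.End.maxGenEigenspace Tc μ) μ hμ) hx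
      have hJx := hminus x hxV
      simp only [LinearMap.sub_apply, LinearMap.smul_apply, Module.End.one_apply,
        hSc, LinearMap.add_apply, hJx, hν, map_smul, smul_smul]
      module
    have hpow : ∀ (k : ℕ) (x : Fin (2 * n) → ℂ), x ∈ maxGenEigenspace Tc μ →
        ((Sc - ν • 1) ^ k) x = (((1 - t : ℝ) : ℂ) ^ k) • (((Tc - μ • 1) ^ k) x) := by
      intro k
      induction k with
      | zero => intro x _; simp
      | succ k ih =>
        intro x hx
        have h1 : ((Sc - ν • 1) ^ (k + 1)) x = ((Sc - ν • 1) ^ k) ((Sc - ν • 1) x) := by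
          rw [pow_succ, Module.End.mul_apply]
        rw [h1, hstep x hx, map_smul, ih _ (hinv μ x hx), ← Module.End.mul_apply,
          ← pow_succ, smul_smul, ← pow_succ']
    intro x hx
    rw [Module.End.mem_maxGenEigenspace] at hx ⊢
    obtain ⟨k, hk⟩ := hx
    refine ⟨k, ?_⟩
    rw [hpow k x (by rw [Module.End.mem_maxGenEigenspace]; exact ⟨k, hk⟩), hk, smul_zero]
  -- everything is in the sup of nonreal gen eigenspaces of Sc
  have htop : (⊤ : Submodule ℂ (Fin (2 * n) → ℂ)) ≤
      ⨆ ν ∈ {ν : ℂ | ν.im ≠ 0}, maxGenEigenspace Sc ν := by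
    rw [← Module.End.iSup_maxGenEigenspace_eq_top Tc]
    refine iSup_le fun μ => ?_
    rcases lt_trichotomy μ.im 0 with h | h | h
    · refine le_trans (fun x hx => keyM μ h x hx) ?_
      refine le_iSup₂ (f := fun ν _ => maxGenEigenspace Sc ν)
        (((1 - t : ℝ) : ℂ) * μ - ((t : ℝ) : ℂ) * Complex.I) ?_
      have : (((1 - t : ℝ) : ℂ) * μ - ((t : ℝ) : ℂ) * Complex.I).im
          = (1 - t) * μ.im - t := by simp
      simp only [Set.mem_setOf_eq, this]
      rcases eq_or_lt_of_le ht0 with h0 | h0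
      · rw [← h0]; simpa using h.ne
      · nlinarith
    · rw [hreal μ h]; exact bot_le
    · refine le_trans (fun x hx => keyP μ h x hx) ?_
      refine le_iSup₂ (f := fun ν _ => maxGenEigenspace Sc ν)
        (((1 - t : ℝ) : ℂ) * μ + ((t : ℝ) : ℂ) * Complex.I) ?_
      have : (((1 - t : ℝ) : ℂ) * μ + ((t : ℝ) : ℂ) * Complex.I).im
          = (1 - t) * μ.im + t := by simp
      simp only [Set.mem_setOf_eq, this]
      rcases eq_or_lt_of_le ht0 with h0 | h0
      · rw [← h0]; simpa using h.ne'
      · nlinarith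
  -- the complexified eigenvector
  set w : Fin (2 * n) → ℂ := fun i => ((v i : ℝ) : ℂ) with hw
  have hwne : w ≠ 0 := by
    intro hcon
    apply hv
    funext i
    have := congrFun hcon i
    simpa [hw] using this
  have hScw : Sc w = ((c : ℝ) : ℂ) • w := by
    have h1 : Sc w = fun i => ((((1 - t) • T + t • J) v) i : ℂ) := by
      funext i
      simp only [hSc, LinearMap.add_apply, LinearMap.smul_apply, hw, hTc, hJc,
        Pi.add_apply, Pi.smul_apply, smul_eq_mul]
      push_cast
      ring
    rw [h1, hEq]
    funext i
    simp [hw]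
  have hmem : w ∈ maxGenEigenspace Sc ((c : ℝ) : ℂ) := by
    rw [Module.End.mem_maxGenEigenspace]
    refine ⟨1, ?_⟩
    rw [pow_one]
    simp [hScw]
  have hdisj : Disjoint (maxGenEigenspace Sc ((c : ℝ) : ℂ))
      (⨆ ν ∈ {ν : ℂ | ν.im ≠ 0}, maxGenEigenspace Sc ν) := by
    refine (Module.End.independent_maxGenEigenspace Sc).disjoint_biSup ?_
    simp
  exact hwne ((Submodule.mem_bot ℂ).mp (hdisj.le_bot ⟨hmem, htop Submodule.mem_top⟩))
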